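/- For 0<q<1 and real t with 0<t<2, setting l = t/2, m = \lfloor nl \rfloor, and any 0<\delta<\min(l,1-l), the Stieltjes–Wigert polynomial satisfies S_n(q^{-nt}u) \cdot (-1)^n (q;q)_n q^{n^2 - m^2 + nmt + (n-m)/2} (-u)^{-m} = \Theta(-q^{-nt+2m+1/2} u) + O(q^{n(l-\delta)} + q^{n(1-l-\delta)}) as n \to \infty, uniformly for u in compact subsets of \{u : 1/M \le |u| \le M\}. -/

import Mathlib

/-- q-Pochhammer symbol (a;q)_m. -/
noncomputable def qPoch (q a : ℝ) (m : ℕ) : ℝ := ∏ j ∈ Finset.range m, (1 - a * q ^ j)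

lemma factor_pos {q : ℝ} (hq0 : 0 < q) (hq1 : q < 1) (j : ℕ) : 0 < 1 - q * q ^ j := by
  have h1 : q ^ j ≤ 1 := pow_le_one₀ hq0.le hq1.le
  nlinarith

lemma qPoch_pos {q : ℝ} (hq0 : 0 < q) (hq1 : q < 1) (a : ℕ) : 0 < qPoch q q a :=
  Finset.prod_pos fun j _ => factor_pos hq0 hq1 j

lemma qPoch_le_one {q : ℝ} (hq0 : 0 < q) (hq1 : q < 1) (a : ℕ) : qPoch q q a ≤ 1 :=
  Finset.prod_le_one (fun j _ => (factor_pos hq0 hq1 j).le)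
    (fun j _ => by nlinarith [pow_pos hq0 j, pow_le_one₀ hq0.le hq1.le (n := j)])

lemma weierstrass (s : Finset ℕ) (f : ℕ → ℝ) (h0 : ∀ i ∈ s, 0 ≤ f i) (h1 : ∀ i ∈ s, f i ≤ 1) :
    1 - ∑ i ∈ s, f i ≤ ∏ i ∈ s, (1 - f i) := by
  induction s using Finset.cons_induction with
  | empty => simp
  | cons a s ha ih =>
    rw [Finset.prod_cons, Finset.sum_cons]
    have hs0 : (0:ℝ) ≤ ∑ i ∈ s, f i :=
      Finset.sum_nonneg fun i hi => h0 i (Finset.mem_cons_of_mem hi)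
    have hih := ih (fun i hi => h0 i (Finset.mem_cons_of_mem hi))
      (fun i hi => h1 i (Finset.mem_cons_of_mem hi))
    have ha0 := h0 a (Finset.mem_cons_self a s)
    have ha1 := h1 a (Finset.mem_cons_self a s)
    nlinarith

lemma geom_tail {q : ℝ} (hq0 : 0 < q) (hq1 : q < 1) (k n : ℕ) :
    ∑ j ∈ Finset.Ico k n, q * q ^ j ≤ q ^ (k + 1) / (1 - q) := by
  rcases le_or_gt k n with hkn | hkn
  · rw [Finset.sum_Ico_eq_sum_range]
    have : ∑ i ∈ Finset.range (n - k), q * q ^ (k + i) =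
        q ^ (k + 1) * ∑ i ∈ Finset.range (n - k), q ^ i := by
      rw [Finset.mul_sum]; exact Finset.sum_congr rfl fun i _ => by ring
    rw [this]
    have hgeom : ∑ i ∈ Finset.range (n - k), q ^ i ≤ 1 / (1 - q) := by
      rw [geom_sum_eq (by linarith : q ≠ 1), ← neg_div_neg_eq]
      have h2 : -(q - 1) = 1 - q := by ring
      have h3 : -(q ^ (n - k) - 1) = 1 - q ^ (n - k) := by ring
      rw [h2, h3, div_le_div_iff₀ (by linarith) (by linarith)]
      nlinarith [pow_pos hq0 (n - k)]
    calc q ^ (k + 1) * ∑ i ∈ Finset.range (n - k), q ^ i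
        ≤ q ^ (k + 1) * (1 / (1 - q)) := by
          exact mul_le_mul_of_nonneg_left hgeom (pow_pos hq0 _).le
      _ = q ^ (k + 1) / (1 - q) := by ring
  · rw [Finset.Ico_eq_empty (by omega)]
    simp only [Finset.sum_empty]
    apply div_nonneg (by positivity) (by linarith)

lemma qPoch_ratio {q : ℝ} (hq0 : 0 < q) (hq1 : q < 1) {k n : ℕ} (hkn : k ≤ n) :
    0 < qPoch q q n / qPoch q q k ∧ qPoch q q n / qPoch q q k ≤ 1 ∧
      1 - qPoch q q n / qPoch q q k ≤ q ^ (k + 1) / (1 - q) := by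
  have hsplit : qPoch q q n = qPoch q q k * ∏ j ∈ Finset.Ico k n, (1 - q * q ^ j) := by
    rw [qPoch, qPoch, Finset.range_eq_Ico, Finset.range_eq_Ico]
    exact (Finset.prod_Ico_consecutive (fun j : ℕ => (1 - q * q ^ j : ℝ)) (Nat.zero_le k) hkn).symm
  have hPk := qPoch_pos hq0 hq1 k
  have hratio : qPoch q q n / qPoch q q k = ∏ j ∈ Finset.Ico k n, (1 - q * q ^ j) := by
    rw [hsplit]; field_simp
  refine ⟨by rw [hratio]; exact Finset.prod_pos fun j _ => factor_pos hq0 hq1 j, ?_, ?_⟩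
  · rw [hratio]
    exact Finset.prod_le_one (fun j _ => (factor_pos hq0 hq1 j).le)
      (fun j _ => by nlinarith [pow_pos hq0 j, pow_le_one₀ hq0.le hq1.le (n := j)])
  · rw [hratio]
    have hw := weierstrass (Finset.Ico k n) (fun j => q * q ^ j)
      (fun j _ => by show (0:ℝ) ≤ q * q ^ j; positivity)
      (fun j _ => by show q * q ^ j ≤ 1; nlinarith [pow_pos hq0 j, pow_le_one₀ hq0.le hq1.le (n := j)])
    have hg := geom_tail hq0 hq1 k n
    linarith

lemma c_inside {q : ℝ} (hq0 : 0 < q) (hq1 : q < 1) {k n : ℕ} (hkn : k ≤ n) :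
    |1 - qPoch q q n ^ 2 / (qPoch q q k * qPoch q q (n - k))| ≤
      (q ^ ((k : ℝ) + 1) + q ^ (((n - k : ℕ) : ℝ) + 1)) / (1 - q) := by
  have hPk := qPoch_pos hq0 hq1 k
  have hPnk := qPoch_pos hq0 hq1 (n - k)
  have hsplit : qPoch q q n ^ 2 / (qPoch q q k * qPoch q q (n - k)) =
      (qPoch q q n / qPoch q q k) * (qPoch q q n / qPoch q q (n - k)) := by
    field_simp
  obtain ⟨hD0, hD1, hDb⟩ := qPoch_ratio hq0 hq1 hkn
  obtain ⟨hE0, hE1, hEb⟩ := qPoch_ratio hq0 hq1 (Nat.sub_le n k)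
  rw [hsplit]
  set D := qPoch q q n / qPoch q q k
  set E := qPoch q q n / qPoch q q (n - k)
  have habs : |1 - D * E| = 1 - D * E := by
    rw [abs_of_nonneg]; nlinarith
  rw [habs]
  have h1 : 1 - D * E ≤ (1 - D) + (1 - E) := by nlinarith
  have hq2 : q ^ ((k : ℝ) + 1) = q ^ (k + 1 : ℕ) := by
    rw [← Real.rpow_natCast q (k + 1)]; push_cast; ring_nf
  have hq3 : q ^ (((n - k : ℕ) : ℝ) + 1) = q ^ ((n - k) + 1 : ℕ) := by
    rw [← Real.rpow_natCast q ((n - k) + 1)]; push_cast; ring_nf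
  rw [hq2, hq3, add_div]
  linarith

lemma summable_nat_part {q M : ℝ} (hq0 : 0 < q) (hq1 : q < 1) (hM : 1 < M) :
    Summable (fun i : ℕ => q ^ ((i : ℝ) ^ 2 - 3 * (i : ℝ)) * M ^ (i : ℝ)) := by
  have hM0 : (0:ℝ) < M := by linarith
  apply summable_of_ratio_norm_eventually_le (r := 1/2) (by norm_num)
  have htend : Filter.Tendsto (fun i : ℕ => M * q ^ (2 * (i : ℝ) - 2)) Filter.atTop (nhds 0) := by
    have h1 : Filter.Tendsto (fun i : ℕ => (M * q ^ (-2 : ℝ)) * (q ^ 2) ^ i)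
        Filter.atTop (nhds ((M * q ^ (-2 : ℝ)) * 0)) := by
      apply Filter.Tendsto.const_mul
      exact tendsto_pow_atTop_nhds_zero_of_lt_one (by positivity) (by nlinarith)
    rw [mul_zero] at h1
    convert h1 using 2 with i
    rw [show (2 : ℝ) * (i : ℝ) - 2 = (-2 : ℝ) + ((2 * i : ℕ) : ℝ) by push_cast; ring,
      Real.rpow_add hq0, Real.rpow_natCast, pow_mul]
    ring
  have hev : ∀ᶠ i : ℕ in Filter.atTop, M * q ^ (2 * (i : ℝ) - 2) ≤ 1/2 :=
    (htend.eventually_lt_const (by norm_num)).mono fun i hi => hi.le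
  filter_upwards [hev] with i hi
  have hfi : (0:ℝ) ≤ q ^ ((i : ℝ) ^ 2 - 3 * (i : ℝ)) * M ^ (i : ℝ) := by positivity
  have hkey : q ^ (((i+1 : ℕ) : ℝ) ^ 2 - 3 * ((i+1 : ℕ) : ℝ)) * M ^ ((i+1 : ℕ) : ℝ) =
      (q ^ ((i : ℝ) ^ 2 - 3 * (i : ℝ)) * M ^ (i : ℝ)) * (M * q ^ (2 * (i : ℝ) - 2)) := by
    rw [show (((i+1 : ℕ) : ℝ) ^ 2 - 3 * ((i+1 : ℕ) : ℝ)) =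
      ((i : ℝ) ^ 2 - 3 * (i : ℝ)) + (2 * (i : ℝ) - 2) by push_cast; ring]
    rw [Real.rpow_add hq0, show ((i+1 : ℕ) : ℝ) = (i : ℝ) + 1 by push_cast; ring,
      Real.rpow_add hM0, Real.rpow_one]
    ring
  rw [Real.norm_of_nonneg (by positivity), Real.norm_of_nonneg hfi, hkey]
  calc (q ^ ((i : ℝ) ^ 2 - 3 * (i : ℝ)) * M ^ (i : ℝ)) * (M * q ^ (2 * (i : ℝ) - 2))
      ≤ (q ^ ((i : ℝ) ^ 2 - 3 * (i : ℝ)) * M ^ (i : ℝ)) * (1/2) :=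
        mul_le_mul_of_nonneg_left hi hfi
    _ = 1/2 * (q ^ ((i : ℝ) ^ 2 - 3 * (i : ℝ)) * M ^ (i : ℝ)) := by ring

lemma summable_bfun {q M : ℝ} (hq0 : 0 < q) (hq1 : q < 1) (hM : 1 < M) :
    Summable (fun j : ℤ => q ^ (((j : ℝ)) ^ 2 - 3 * |(j : ℝ)|) * M ^ |(j : ℝ)|) := by
  apply Summable.of_nat_of_neg
  · apply (summable_nat_part hq0 hq1 hM).congr
    intro i
    norm_num
  · apply (summable_nat_part hq0 hq1 hM).congr
    intro i
    rw [show (((-(i:ℤ)) : ℤ) : ℝ) = -(i:ℝ) by push_cast; ring]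
    rw [abs_neg, abs_of_nonneg (Nat.cast_nonneg i), neg_pow, neg_one_sq, one_mul]


/-- Gaussian (q-)binomial coefficient. -/
noncomputable def qbinom (q : ℝ) (n k : ℕ) : ℝ :=
  qPoch q q n / (qPoch q q k * qPoch q q (n - k))

/-- Monic Stieltjes–Wigert polynomial. -/
noncomputable def SW (q : ℝ) (n : ℕ) (x : ℝ) : ℝ :=
  (-1) ^ n * q ^ (-(n : ℝ) ^ 2 - n / 2) *
    ∑ k ∈ Finset.range (n + 1), qbinom q n k * q ^ ((k : ℝ) ^ 2 + k / 2) * (-x) ^ k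

/-- Theta function at a real argument. -/
noncomputable def ThetaR (q x : ℝ) : ℝ := ∑' k : ℤ, q ^ (k ^ 2) * x ^ k

noncomputable def gf (q r u : ℝ) (j : ℤ) : ℝ := q ^ ((j : ℝ) ^ 2 + r * (j : ℝ)) * (-u) ^ j

noncomputable def cf (q : ℝ) (n m : ℕ) (j : ℤ) : ℝ :=
  if 0 ≤ j + (m : ℤ) ∧ j + (m : ℤ) ≤ (n : ℤ) then
    qPoch q q n ^ 2 / (qPoch q q (j + (m : ℤ)).toNat * qPoch q q (n - (j + (m : ℤ)).toNat))
  else 0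

noncomputable def bf (q M : ℝ) (j : ℤ) : ℝ :=
  q ^ ((j : ℝ) ^ 2 - 3 * |(j : ℝ)|) * M ^ |(j : ℝ)|

lemma rpow_le_M {M a : ℝ} (hM : 1 < M) (ha0 : 0 < a) (h1 : 1 / M ≤ a) (h2 : a ≤ M) (x : ℝ) :
    a ^ x ≤ M ^ |x| := by
  have hM0 : (0:ℝ) < M := by linarith
  rcases le_or_gt 0 x with hx | hx
  · rw [abs_of_nonneg hx]; exact Real.rpow_le_rpow ha0.le h2 hx
  · rw [abs_of_neg hx]
    have hainv : a⁻¹ ≤ M := by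
      rw [div_le_iff₀ hM0] at h1
      rw [← one_div, div_le_iff₀ ha0]
      linarith
    have key : a ^ x = (a⁻¹) ^ (-x) := by
      rw [Real.inv_rpow ha0.le, Real.rpow_neg ha0.le, inv_inv]
    rw [key]
    exact Real.rpow_le_rpow (by positivity) hainv (by linarith)

lemma theta_expand {q u : ℝ} (hq0 : 0 < q) (ρ : ℝ) :
    ThetaR q (-(q ^ ρ) * u) = ∑' j : ℤ, gf q ρ u j := by
  rw [ThetaR]
  apply tsum_congr
  intro j
  rw [gf]
  have h1 : (-(q ^ ρ) * u) = (q ^ ρ) * (-u) := by ring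
  rw [h1, mul_zpow]
  have h2 : (q ^ ρ) ^ j = q ^ (ρ * (j : ℝ)) := by
    rw [← Real.rpow_intCast (q ^ ρ) j, ← Real.rpow_mul hq0.le]
  have h3 : q ^ (j ^ 2) = q ^ (((j : ℝ)) ^ 2) := by
    rw [← Real.rpow_intCast q (j ^ 2)]; push_cast; ring_nf
  rw [h2, h3, ← mul_assoc, ← Real.rpow_add hq0]

lemma abs_zpow' (a : ℝ) (j : ℤ) : |a ^ j| = |a| ^ j := by
  rcases j with n | n
  · simpa using abs_pow a n
  · rw [zpow_negSucc, zpow_negSucc, abs_inv, abs_pow]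

lemma gf_abs_le {q M u : ℝ} (hq0 : 0 < q) (hM : 1 < M) (hu1 : 1 / M ≤ |u|) (hu2 : |u| ≤ M)
    (r : ℝ) (j : ℤ) :
    |gf q r u j| ≤ q ^ ((j : ℝ) ^ 2 + r * (j : ℝ)) * M ^ |(j : ℝ)| := by
  have hu0 : (0:ℝ) < |u| := lt_of_lt_of_le (by positivity) hu1
  rw [gf, abs_mul, abs_of_nonneg (Real.rpow_nonneg hq0.le _), abs_zpow', abs_neg]
  have h1 : |u| ^ j = |u| ^ ((j : ℤ) : ℝ) := (Real.rpow_intCast _ j).symm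
  rw [h1]
  exact mul_le_mul_of_nonneg_left (rpow_le_M hM hu0 hu1 hu2 _)
    (Real.rpow_nonneg hq0.le _)

lemma cf_bound {q : ℝ} (hq0 : 0 < q) (hq1 : q < 1) (n m : ℕ) (j : ℤ) :
    |1 - cf q n m j| ≤
      (q ^ ((j : ℝ) + (m : ℝ) + 1) + q ^ ((n : ℝ) - (m : ℝ) - (j : ℝ) + 1)) / (1 - q) := by
  have hq1' : (0:ℝ) < 1 - q := by linarith
  rw [cf]
  split_ifs with h
  · obtain ⟨h1, h2⟩ := h
    set k := (j + (m : ℤ)).toNat with hk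
    have hkj : (k : ℤ) = j + m := Int.toNat_of_nonneg h1
    have hkn : k ≤ n := by omega
    have hmain := c_inside hq0 hq1 (q := q) hkn
    have hcast : ((k : ℤ) : ℝ) = ((j + (m : ℤ) : ℤ) : ℝ) := by rw [hkj]
    push_cast at hcast
    have e1 : ((k : ℝ) + 1) = (j : ℝ) + (m : ℝ) + 1 := by linarith
    have e2 : (((n - k : ℕ) : ℝ) + 1) = (n : ℝ) - (m : ℝ) - (j : ℝ) + 1 := by
      rw [Nat.cast_sub hkn]
      linarith
    rw [e1, e2] at hmain
    exact hmain
  · rw [sub_zero, abs_one, le_div_iff₀ hq1']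
    have hnn1 : (0:ℝ) ≤ q ^ ((j : ℝ) + (m : ℝ) + 1) := Real.rpow_nonneg hq0.le _
    have hnn2 : (0:ℝ) ≤ q ^ ((n : ℝ) - (m : ℝ) - (j : ℝ) + 1) := Real.rpow_nonneg hq0.le _
    rw [not_and_or, not_le, not_le] at h
    rcases h with h | h
    · have hexp : (j : ℝ) + (m : ℝ) + 1 ≤ 0 := by
        have : (j : ℤ) + (m : ℤ) + 1 ≤ 0 := by omega
        exact_mod_cast this
      have := Real.one_le_rpow_of_pos_of_le_one_of_nonpos hq0 hq1.le hexp
      linarith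
    · have hexp : (n : ℝ) - (m : ℝ) - (j : ℝ) + 1 ≤ 0 := by
        have hz : (n : ℤ) + 1 ≤ j + (m : ℤ) := by omega
        have hzr : (n : ℝ) + 1 ≤ (j : ℝ) + (m : ℝ) := by exact_mod_cast hz
        linarith
      have := Real.one_le_rpow_of_pos_of_le_one_of_nonpos hq0 hq1.le hexp
      linarith

lemma finite_side {q t u : ℝ} (hq0 : 0 < q) (hu : u ≠ 0) (n m : ℕ) :
    SW q n (q ^ (-(n : ℝ) * t) * u) * ((-1) ^ n * qPoch q q n *
        q ^ ((n : ℝ) ^ 2 - (m : ℝ) ^ 2 + (n : ℝ) * (m : ℝ) * t + ((n : ℝ) - (m : ℝ)) / 2) *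
        (-u) ^ (-(m : ℤ))) =
      ∑' j : ℤ, cf q n m j * gf q (-(n : ℝ) * t + 2 * (m : ℝ) + 1 / 2) u j := by
  have hu' : -u ≠ 0 := neg_ne_zero.mpr hu
  set r : ℝ := -(n : ℝ) * t + 2 * (m : ℝ) + 1 / 2 with hrdef
  set W : Finset ℤ := (Finset.range (n + 1)).image (fun k : ℕ => (k : ℤ) - (m : ℤ)) with hW
  have hvanish : ∀ j ∉ W, cf q n m j * gf q r u j = 0 := by
    intro j hj
    rw [cf]
    rw [if_neg, zero_mul]
    intro hcond
    apply hj
    rw [hW, Finset.mem_image]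
    refine ⟨(j + (m : ℤ)).toNat, ?_, ?_⟩
    · rw [Finset.mem_range]; omega
    · omega
  rw [tsum_eq_sum hvanish, hW, Finset.sum_image (by intro a _ b _ hab; simp only at hab; omega)]
  rw [SW]
  have hsign : ((-1 : ℝ)) ^ n * (-1) ^ n = 1 := by
    rw [← pow_add]
    exact Even.neg_one_pow ⟨n, by ring⟩
  set P := qPoch q q n with hP
  set e1 : ℝ := -(n : ℝ) ^ 2 - (n : ℝ) / 2 with he1
  set E : ℝ := (n : ℝ) ^ 2 - (m : ℝ) ^ 2 + (n : ℝ) * (m : ℝ) * t + ((n : ℝ) - (m : ℝ)) / 2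
    with hE
  set a : ℝ := -(n : ℝ) * t with ha
  calc ((-1 : ℝ)) ^ n * q ^ e1 *
        (∑ k ∈ Finset.range (n + 1), qbinom q n k * q ^ ((k : ℝ) ^ 2 + (k : ℝ) / 2)
          * (-(q ^ a * u)) ^ k) *
        ((-1) ^ n * P * q ^ E * (-u) ^ (-(m : ℤ)))
      = ((-1 : ℝ)) ^ n * (-1) ^ n *
        ∑ k ∈ Finset.range (n + 1), (qbinom q n k * q ^ ((k : ℝ) ^ 2 + (k : ℝ) / 2)
          * (-(q ^ a * u)) ^ k) * (q ^ e1 * P * q ^ E * (-u) ^ (-(m : ℤ))) := by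
        rw [← Finset.sum_mul]
        ring
    _ = ∑ k ∈ Finset.range (n + 1), (qbinom q n k * q ^ ((k : ℝ) ^ 2 + (k : ℝ) / 2)
          * (-(q ^ a * u)) ^ k) * (q ^ e1 * P * q ^ E * (-u) ^ (-(m : ℤ))) := by
        rw [hsign, one_mul]
    _ = ∑ k ∈ Finset.range (n + 1), cf q n m ((k : ℤ) - (m : ℤ)) * gf q r u ((k : ℤ) - (m : ℤ)) := by
        apply Finset.sum_congr rfl
        intro k hk
        rw [Finset.mem_range] at hk
        have hkn : k ≤ n := by omega
        -- expand the power of the negative argument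
        have hneg : (-(q ^ a * u)) ^ k = q ^ (a * (k : ℝ)) * (-u) ^ k := by
          rw [show -(q ^ a * u) = q ^ a * (-u) by ring, mul_pow,
            ← Real.rpow_natCast (q ^ a) k, ← Real.rpow_mul hq0.le]
        -- the cf factor
        have hcond : 0 ≤ (k : ℤ) - (m : ℤ) + (m : ℤ) ∧ (k : ℤ) - (m : ℤ) + (m : ℤ) ≤ (n : ℤ) := by
          constructor <;> omega
        have htn : ((k : ℤ) - (m : ℤ) + (m : ℤ)).toNat = k := by omega
        have hcf : cf q n m ((k : ℤ) - (m : ℤ)) = P ^ 2 / (qPoch q q k * qPoch q q (n - k)) := by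
          rw [cf, if_pos hcond, htn]
        -- the gf factor
        have hcast : (((k : ℤ) - (m : ℤ) : ℤ) : ℝ) = (k : ℝ) - (m : ℝ) := by push_cast; ring
        have hzw : (-u) ^ ((k : ℤ) - (m : ℤ)) = (-u) ^ k * (-u) ^ (-(m : ℤ)) := by
          rw [sub_eq_add_neg, zpow_add₀ hu', zpow_natCast]
        have hexp : e1 + ((k : ℝ) ^ 2 + (k : ℝ) / 2) + a * (k : ℝ) + E =
            ((k : ℝ) - (m : ℝ)) ^ 2 + r * ((k : ℝ) - (m : ℝ)) := by
          rw [he1, hE, ha, hrdef]; ring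
        have hgf : gf q r u ((k : ℤ) - (m : ℤ)) =
            q ^ e1 * q ^ ((k : ℝ) ^ 2 + (k : ℝ) / 2) * q ^ (a * (k : ℝ)) * q ^ E *
              ((-u) ^ k * (-u) ^ (-(m : ℤ))) := by
          rw [gf, hcast, ← hexp, Real.rpow_add hq0, Real.rpow_add hq0, Real.rpow_add hq0, hzw]
        rw [hgf, hcf, hneg, qbinom]
        ring

lemma cf_vanish (q : ℝ) (n m : ℕ) (j : ℤ)
    (hj : j ∉ (Finset.range (n + 1)).image (fun k : ℕ => (k : ℤ) - (m : ℤ))) :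
    cf q n m j = 0 := by
  rw [cf, if_neg]
  intro hcond
  apply hj
  rw [Finset.mem_image]
  refine ⟨(j + (m : ℤ)).toNat, ?_, ?_⟩
  · rw [Finset.mem_range]; omega
  · omega

lemma bf_nonneg {q M : ℝ} (hq0 : 0 < q) (hM : 1 < M) (j : ℤ) : 0 ≤ bf q M j := by
  unfold bf
  have hM0 : (0:ℝ) < M := by linarith
  positivity

/-- Asymptotics of the Stieltjes–Wigert polynomials in the oscillatory interval. -/
theorem stmt16 (q t M δ : ℝ) (hq0 : 0 < q) (hq1 : q < 1) (ht0 : 0 < t) (ht2 : t < 2)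
    (hM : 1 < M) (hδ0 : 0 < δ) (hδ : δ < min (t / 2) (1 - t / 2)) :
    ∃ C > 0, ∃ N₀ : ℕ, ∀ n : ℕ, N₀ ≤ n → ∀ u : ℝ, 1 / M ≤ |u| → |u| ≤ M →
      |SW q n (q ^ (-(n : ℝ) * t) * u) * ((-1) ^ n * qPoch q q n *
            q ^ ((n : ℝ) ^ 2 - (⌊(n : ℝ) * (t / 2)⌋₊ : ℝ) ^ 2 + n * (⌊(n : ℝ) * (t / 2)⌋₊ : ℝ) * t
              + ((n : ℝ) - ⌊(n : ℝ) * (t / 2)⌋₊) / 2) * (-u) ^ (-(⌊(n : ℝ) * (t / 2)⌋₊ : ℤ))) -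
          ThetaR q (-(q ^ (-(n : ℝ) * t + 2 * (⌊(n : ℝ) * (t / 2)⌋₊ : ℝ) + 1 / 2)) * u)| ≤
        C * (q ^ ((n : ℝ) * (t / 2 - δ)) + q ^ ((n : ℝ) * (1 - t / 2 - δ))) := by
  have hq1' : (0:ℝ) < 1 - q := by linarith
  have hM0 : (0:ℝ) < M := by linarith
  have hbsum' : Summable (bf q M) := by
    unfold bf; exact summable_bfun hq0 hq1 hM
  set K : ℝ := ∑' j : ℤ, bf q M j with hKdef
  have hbf0 : bf q M 0 = 1 := by
    unfold bf
    norm_num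
  have hKpos : 0 < K :=
    lt_of_lt_of_le one_pos (by
      rw [← hbf0]
      exact Summable.le_tsum hbsum' 0 fun j _ => bf_nonneg hq0 hM j)
  refine ⟨K / (1 - q), div_pos hKpos hq1', 0, ?_⟩
  intro n _ u hu1 hu2
  have hu0 : u ≠ 0 := by
    intro h
    rw [h, abs_zero] at hu1
    have : (0:ℝ) < 1 / M := by positivity
    linarith
  set m : ℕ := ⌊(n : ℝ) * (t / 2)⌋₊ with hmdef
  set r : ℝ := -(n : ℝ) * t + 2 * (m : ℝ) + 1 / 2 with hrdef
  rw [theta_expand hq0, finite_side hq0 hu0 n m, ← hrdef]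
  -- bounds on r
  have hm_le : (m : ℝ) ≤ (n : ℝ) * (t / 2) := Nat.floor_le (by positivity)
  have hm_gt : (n : ℝ) * (t / 2) < (m : ℝ) + 1 := Nat.lt_floor_add_one _
  have hrub : r ≤ 1 / 2 := by rw [hrdef]; linarith
  have hrlb : (-3 : ℝ) / 2 < r := by rw [hrdef]; linarith
  clear_value m r
  -- pointwise norm bound for gf
  have hrj : ∀ (c : ℝ) (j : ℤ), |c| ≤ 3 → -(3 * |(j : ℝ)|) ≤ c * (j : ℝ) := by
    intro c j hc
    have h1 := neg_abs_le (c * (j : ℝ))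
    have h2 : |c * (j : ℝ)| ≤ 3 * |(j : ℝ)| := by
      rw [abs_mul]
      exact mul_le_mul_of_nonneg_right hc (abs_nonneg _)
    linarith
  have hgfb : ∀ j : ℤ, ‖gf q r u j‖ ≤ bf q M j := by
    intro j
    rw [Real.norm_eq_abs]
    refine (gf_abs_le hq0 hM hu1 hu2 r j).trans ?_
    unfold bf
    refine mul_le_mul_of_nonneg_right ?_ (Real.rpow_nonneg hM0.le _)
    apply Real.rpow_le_rpow_of_exponent_ge hq0 hq1.le
    have := hrj r j (by rw [abs_le]; constructor <;> linarith)
    linarith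
  set coef : ℝ := (q ^ ((m : ℝ) + 1) + q ^ ((n : ℝ) - (m : ℝ) + 1)) / (1 - q) with hcoefdef
  have hmaster : ∀ j : ℤ, ‖cf q n m j * gf q r u j - gf q r u j‖ ≤ coef * bf q M j := by
    intro j
    have h1 : cf q n m j * gf q r u j - gf q r u j = -((1 - cf q n m j) * gf q r u j) := by ring
    rw [h1, norm_neg, Real.norm_eq_abs, abs_mul]
    have hC := cf_bound hq0 hq1 n m j
    have hG := gf_abs_le hq0 hM hu1 hu2 r j
    have step1 : |1 - cf q n m j| * |gf q r u j| ≤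
        ((q ^ ((j : ℝ) + (m : ℝ) + 1) + q ^ ((n : ℝ) - (m : ℝ) - (j : ℝ) + 1)) / (1 - q)) *
          (q ^ ((j : ℝ) ^ 2 + r * (j : ℝ)) * M ^ |(j : ℝ)|) := by
      apply mul_le_mul hC hG (abs_nonneg _)
      positivity
    refine step1.trans ?_
    have k1 : q ^ ((j : ℝ) + (m : ℝ) + 1) * q ^ ((j : ℝ) ^ 2 + r * (j : ℝ)) ≤
        q ^ ((m : ℝ) + 1) * q ^ ((j : ℝ) ^ 2 - 3 * |(j : ℝ)|) := by
      rw [← Real.rpow_add hq0, ← Real.rpow_add hq0]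
      apply Real.rpow_le_rpow_of_exponent_ge hq0 hq1.le
      have h := hrj (r + 1) j (by rw [abs_le]; constructor <;> linarith)
      have hx : (r + 1) * (j : ℝ) = r * (j : ℝ) + (j : ℝ) := by ring
      linarith
    have k2 : q ^ ((n : ℝ) - (m : ℝ) - (j : ℝ) + 1) * q ^ ((j : ℝ) ^ 2 + r * (j : ℝ)) ≤
        q ^ ((n : ℝ) - (m : ℝ) + 1) * q ^ ((j : ℝ) ^ 2 - 3 * |(j : ℝ)|) := by
      rw [← Real.rpow_add hq0, ← Real.rpow_add hq0]
      apply Real.rpow_le_rpow_of_exponent_ge hq0 hq1.le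
      have h := hrj (r - 1) j (by rw [abs_le]; constructor <;> linarith)
      have hx : (r - 1) * (j : ℝ) = r * (j : ℝ) - (j : ℝ) := by ring
      linarith
    have hMnn : (0:ℝ) ≤ M ^ |(j : ℝ)| := Real.rpow_nonneg hM0.le _
    have expand1 : ((q ^ ((j : ℝ) + (m : ℝ) + 1) + q ^ ((n : ℝ) - (m : ℝ) - (j : ℝ) + 1)) / (1 - q)) *
        (q ^ ((j : ℝ) ^ 2 + r * (j : ℝ)) * M ^ |(j : ℝ)|) =
        ((q ^ ((j : ℝ) + (m : ℝ) + 1) * q ^ ((j : ℝ) ^ 2 + r * (j : ℝ)) +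
          q ^ ((n : ℝ) - (m : ℝ) - (j : ℝ) + 1) * q ^ ((j : ℝ) ^ 2 + r * (j : ℝ))) * M ^ |(j : ℝ)|)
          / (1 - q) := by ring
    have expand2 : coef * bf q M j =
        ((q ^ ((m : ℝ) + 1) * q ^ ((j : ℝ) ^ 2 - 3 * |(j : ℝ)|) +
          q ^ ((n : ℝ) - (m : ℝ) + 1) * q ^ ((j : ℝ) ^ 2 - 3 * |(j : ℝ)|)) * M ^ |(j : ℝ)|)
          / (1 - q) := by
      rw [hcoefdef]; unfold bf; ring
    rw [expand1, expand2]
    exact (div_le_div_iff_of_pos_right hq1').mpr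
      (mul_le_mul_of_nonneg_right (add_le_add k1 k2) hMnn)
  have hg_sum : Summable (gf q r u) := Summable.of_norm_bounded hbsum' hgfb
  have hcg_sum : Summable (fun j : ℤ => cf q n m j * gf q r u j) :=
    summable_of_ne_finset_zero
      (s := (Finset.range (n + 1)).image fun k : ℕ => (k : ℤ) - (m : ℤ))
      (fun j hj => by rw [cf_vanish q n m j hj, zero_mul])
  have hg_sum' : Summable (fun j : ℤ => gf q r u j) := hg_sum
  have hdiff_sum : Summable (fun j : ℤ => cf q n m j * gf q r u j - gf q r u j) :=
    hcg_sum.sub hg_sum'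
  have hnorm_sum : Summable (fun j : ℤ => ‖cf q n m j * gf q r u j - gf q r u j‖) :=
    Summable.of_nonneg_of_le (fun j => norm_nonneg _) hmaster (hbsum'.mul_left coef)
  have heq : ∑' j : ℤ, (cf q n m j * gf q r u j - gf q r u j) =
      (∑' j : ℤ, cf q n m j * gf q r u j) - ∑' j : ℤ, gf q r u j :=
    Summable.tsum_sub hcg_sum hg_sum'
  rw [← heq]
  have hstep := norm_tsum_le_tsum_norm hnorm_sum
  rw [Real.norm_eq_abs] at hstep
  refine hstep.trans ?_
  have hstep2 : ∑' j : ℤ, ‖cf q n m j * gf q r u j - gf q r u j‖ ≤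
      ∑' j : ℤ, coef * bf q M j :=
    Summable.tsum_le_tsum hmaster hnorm_sum (hbsum'.mul_left coef)
  refine hstep2.trans ?_
  rw [tsum_mul_left, ← hKdef]
  have hA : q ^ ((m : ℝ) + 1) ≤ q ^ ((n : ℝ) * (t / 2 - δ)) := by
    apply Real.rpow_le_rpow_of_exponent_ge hq0 hq1.le
    have hnd : (0:ℝ) ≤ (n : ℝ) * δ := by positivity
    have hexp : (n : ℝ) * (t / 2 - δ) = (n : ℝ) * (t / 2) - (n : ℝ) * δ := by ring
    linarith
  have hB : q ^ ((n : ℝ) - (m : ℝ) + 1) ≤ q ^ ((n : ℝ) * (1 - t / 2 - δ)) := by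
    apply Real.rpow_le_rpow_of_exponent_ge hq0 hq1.le
    have hnd : (0:ℝ) ≤ (n : ℝ) * δ := by positivity
    have hexp : (n : ℝ) * (1 - t / 2 - δ) =
        (n : ℝ) - (n : ℝ) * (t / 2) - (n : ℝ) * δ := by ring
    linarith
  calc coef * K
      ≤ ((q ^ ((n : ℝ) * (t / 2 - δ)) + q ^ ((n : ℝ) * (1 - t / 2 - δ))) / (1 - q)) * K := by
        apply mul_le_mul_of_nonneg_right _ hKpos.le
        rw [hcoefdef]
        exact (div_le_div_iff_of_pos_right hq1').mpr (add_le_add hA hB)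
    _ = K / (1 - q) * (q ^ ((n : ℝ) * (t / 2 - δ)) + q ^ ((n : ℝ) * (1 - t / 2 - δ))) := by
        ring
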